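/- Let X and Y be independent Poisson random variables with parameters t/n and u/n respectively, where t ≥ n > 0 and u ≥ 0. Then P(X ≤ Y) ≤ exp(-t/n + 2tu/n²). -/
import Mathlib


open MeasureTheory ProbabilityTheory Real

lemma poisson_aux_sum_le (lam : ℝ) (hlam : 1 ≤ lam) (k : ℕ) :
    ∑ j ∈ Finset.range (k+1), lam ^ j / (Nat.factorial j) ≤ (2*lam) ^ k := by
  have hl0 : 0 ≤ lam := by linarith
  induction k with
  | zero => simp
  | succ k ih =>
    rw [Finset.sum_range_succ]
    have h1 : lam ^ (k+1) / (Nat.factorial (k+1)) ≤ lam ^ (k+1) := by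
      apply div_le_self (pow_nonneg hl0 _)
      exact_mod_cast Nat.one_le_iff_ne_zero.mpr (Nat.factorial_ne_zero _)
    have hA : lam ^ k ≤ (2*lam) ^ k := pow_le_pow_left₀ hl0 (by linarith) k
    have hB : (0:ℝ) ≤ (2*lam)^k := pow_nonneg (by linarith) k
    have h2 : (2*lam) ^ k + lam ^ (k+1) ≤ (2*lam) ^ (k+1) := by
      rw [pow_succ, pow_succ]
      nlinarith
    linarith

/-- If `X ~ Poisson(t/n)` and `Y ~ Poisson(u/n)` are independent, with `t ≥ n > 0` and
`u ≥ 0`, then `P(X ≤ Y) ≤ exp(-t/n + 2tu/n²)`. -/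
theorem poisson_le_poisson_bound
    {Ω : Type*} [MeasurableSpace Ω] (P : Measure Ω) [IsProbabilityMeasure P]
    (t u n : ℝ) (hn : 0 < n) (ht : n ≤ t) (hu : 0 ≤ u)
    (X Y : Ω → ℕ)
    (hX : ∀ k : ℕ, P {ω | X ω = k}
      = ENNReal.ofReal (Real.exp (-(t / n)) * (t / n) ^ k / (Nat.factorial k)))
    (hY : ∀ k : ℕ, P {ω | Y ω = k}
      = ENNReal.ofReal (Real.exp (-(u / n)) * (u / n) ^ k / (Nat.factorial k)))
    (hindep : IndepFun X Y P) :
    P {ω | X ω ≤ Y ω} ≤ ENNReal.ofReal (Real.exp (-(t / n) + 2 * t * u / n ^ 2)) := by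
  set lam : ℝ := t / n with hlamdef
  set mu : ℝ := u / n with hmudef
  have hlam : 1 ≤ lam := (one_le_div hn).mpr ht
  have hlam0 : 0 ≤ lam := by linarith
  have hmu : 0 ≤ mu := div_nonneg hu hn.le
  -- Step 1: subadditivity over the value of Y
  have step1 : P {ω | X ω ≤ Y ω}
      ≤ ∑' k : ℕ, P (X ⁻¹' Set.Iic k ∩ Y ⁻¹' {k}) := by
    refine le_trans (measure_mono ?_) (measure_iUnion_le _)
    intro ω h
    exact Set.mem_iUnion.mpr ⟨Y ω, h, rfl⟩
  -- Step 2: independence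
  have step2 : ∀ k : ℕ, P (X ⁻¹' Set.Iic k ∩ Y ⁻¹' {k})
      = P (X ⁻¹' Set.Iic k) * P (Y ⁻¹' {k}) := fun k =>
    hindep.measure_inter_preimage_eq_mul _ _ measurableSet_Iic (measurableSet_singleton k)
  -- Step 3: bound P(X ≤ k)
  have step3 : ∀ k : ℕ, P (X ⁻¹' Set.Iic k)
      ≤ ENNReal.ofReal (Real.exp (-lam) * (2*lam) ^ k) := by
    intro k
    have hsub : X ⁻¹' Set.Iic k ⊆ ⋃ j ∈ Finset.range (k+1), {ω | X ω = j} := by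
      intro ω h
      exact Set.mem_biUnion (Finset.mem_range.mpr (Nat.lt_succ_of_le h)) rfl
    calc P (X ⁻¹' Set.Iic k)
        ≤ ∑ j ∈ Finset.range (k+1), P {ω | X ω = j} :=
          le_trans (measure_mono hsub) (measure_biUnion_finset_le _ _)
      _ = ∑ j ∈ Finset.range (k+1),
            ENNReal.ofReal (Real.exp (-lam) * lam ^ j / (Nat.factorial j)) := by
          simp only [hX]
      _ = ENNReal.ofReal (∑ j ∈ Finset.range (k+1),
            Real.exp (-lam) * lam ^ j / (Nat.factorial j)) := by
          rw [ENNReal.ofReal_sum_of_nonneg]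
          intro j _
          positivity
      _ ≤ ENNReal.ofReal (Real.exp (-lam) * (2*lam) ^ k) := by
          apply ENNReal.ofReal_le_ofReal
          have := poisson_aux_sum_le lam hlam k
          calc ∑ j ∈ Finset.range (k+1), Real.exp (-lam) * lam ^ j / (Nat.factorial j)
              = Real.exp (-lam) * ∑ j ∈ Finset.range (k+1), lam ^ j / (Nat.factorial j) := by
                rw [Finset.mul_sum]; congr 1; ext j; ring
            _ ≤ Real.exp (-lam) * (2*lam) ^ k := by
                exact mul_le_mul_of_nonneg_left this (Real.exp_nonneg _)
  -- Step 4: per-term bound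
  have hYk : ∀ k : ℕ, P (Y ⁻¹' {k})
      = ENNReal.ofReal (Real.exp (-mu) * mu ^ k / (Nat.factorial k)) := by
    intro k
    have : Y ⁻¹' {k} = {ω | Y ω = k} := rfl
    rw [this, hY k]
  have step4 : ∀ k : ℕ, P (X ⁻¹' Set.Iic k ∩ Y ⁻¹' {k})
      ≤ ENNReal.ofReal (Real.exp (-lam - mu) * (2*lam*mu) ^ k / (Nat.factorial k)) := by
    intro k
    rw [step2 k, hYk k]
    calc P (X ⁻¹' Set.Iic k) * ENNReal.ofReal (Real.exp (-mu) * mu ^ k / (Nat.factorial k))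
        ≤ ENNReal.ofReal (Real.exp (-lam) * (2*lam) ^ k)
            * ENNReal.ofReal (Real.exp (-mu) * mu ^ k / (Nat.factorial k)) :=
          mul_le_mul_left (step3 k) _
      _ = ENNReal.ofReal ((Real.exp (-lam) * (2*lam) ^ k)
            * (Real.exp (-mu) * mu ^ k / (Nat.factorial k))) :=
          (ENNReal.ofReal_mul (by positivity)).symm
      _ = ENNReal.ofReal (Real.exp (-lam - mu) * (2*lam*mu) ^ k / (Nat.factorial k)) := by
          congr 1
          have hexp : Real.exp (-lam - mu) = Real.exp (-lam) * Real.exp (-mu) := by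
            rw [← Real.exp_add]; ring_nf
          rw [hexp, mul_pow]
          ring
  -- Step 5: sum the bound
  have hsummable : Summable (fun k : ℕ =>
      Real.exp (-lam - mu) * (2*lam*mu) ^ k / (Nat.factorial k)) := by
    simp only [mul_div_assoc]
    exact (Real.summable_pow_div_factorial (2*lam*mu)).mul_left _
  have htsum : ∑' k : ℕ, (2*lam*mu) ^ k / (Nat.factorial k : ℝ) = Real.exp (2*lam*mu) := by
    rw [Real.exp_eq_exp_ℝ, NormedSpace.exp_eq_tsum_div]
  have step5 : ∑' k : ℕ, ENNReal.ofReal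
        (Real.exp (-lam - mu) * (2*lam*mu) ^ k / (Nat.factorial k))
      = ENNReal.ofReal (Real.exp (-lam - mu + 2*lam*mu)) := by
    rw [← ENNReal.ofReal_tsum_of_nonneg (fun k => by positivity) hsummable]
    congr 1
    simp only [mul_div_assoc]
    rw [tsum_mul_left, htsum, ← Real.exp_add]
  -- Combine
  calc P {ω | X ω ≤ Y ω}
      ≤ ∑' k : ℕ, P (X ⁻¹' Set.Iic k ∩ Y ⁻¹' {k}) := step1
    _ ≤ ∑' k : ℕ, ENNReal.ofReal
          (Real.exp (-lam - mu) * (2*lam*mu) ^ k / (Nat.factorial k)) :=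
        ENNReal.tsum_le_tsum step4
    _ = ENNReal.ofReal (Real.exp (-lam - mu + 2*lam*mu)) := step5
    _ ≤ ENNReal.ofReal (Real.exp (-(t / n) + 2 * t * u / n ^ 2)) := by
        apply ENNReal.ofReal_le_ofReal
        apply Real.exp_le_exp.mpr
        have : 2 * t * u / n ^ 2 = 2 * lam * mu := by
          rw [hlamdef, hmudef]; ring
        rw [this]
        linarith
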